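/- (Cube Lemma) Let λ be a ternary operation on a set M, written [z x y], satisfying symmetry [z x y] = [y x z] and (weak) flatness: [[w x y] y [y x z]] = [[w x z] z [z x y]] for all x, y, z, w. Then for any points 0, 1, 2, 4 of M, the six expressions [[4·0·1] 1 [1·0·2]], [[4·0·2] 2 [2·0·1]], [[2·0·4] 4 [4·0·1]], [[2·0·1] 1 [1·0·4]], [[1·0·2] 2 [2·0·4]], and [[1·0·4] 4 [4·0·2]] are all equal. -/
import Mathlib


/-- Cube Lemma: for a symmetric, weakly flat ternary operation
`T z x y = [z x y]`, the six expressions around the cube agree. -/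
theorem cube_lemma {M : Type*} (T : M → M → M → M)
    (hsymm : ∀ x y z : M, T z x y = T y x z)
    (hflat : ∀ x y z w : M, T (T w x y) y (T y x z) = T (T w x z) z (T z x y)) :
    ∀ o a b c : M,
      T (T c o a) a (T a o b) = T (T c o b) b (T b o a) ∧
      T (T c o b) b (T b o a) = T (T b o c) c (T c o a) ∧
      T (T b o c) c (T c o a) = T (T b o a) a (T a o c) ∧
      T (T b o a) a (T a o c) = T (T a o b) b (T b o c) ∧
      T (T a o b) b (T b o c) = T (T a o c) c (T c o b) := by
  intro o a b c
  refine ⟨hflat o a b c, ?_, hflat o c a b, ?_, hflat o b c a⟩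
  · calc T (T c o b) b (T b o a)
        = T (T b o a) b (T c o b) := hsymm b (T b o a) (T c o b)
      _ = T (T a o b) b (T b o c) := by rw [hsymm o b a, hsymm o b c]
      _ = T (T a o c) c (T c o b) := hflat o b c a
      _ = T (T c o b) c (T a o c) := hsymm c (T c o b) (T a o c)
      _ = T (T b o c) c (T c o a) := by rw [hsymm o c b, hsymm o c a]
  · calc T (T b o a) a (T a o c)
        = T (T a o c) a (T b o a) := hsymm a (T a o c) (T b o a)
      _ = T (T c o a) a (T a o b) := by rw [hsymm o a c, hsymm o a b]
      _ = T (T c o b) b (T b o a) := hflat o a b c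
      _ = T (T b o a) b (T c o b) := hsymm b (T b o a) (T c o b)
      _ = T (T a o b) b (T b o c) := by rw [hsymm o b a, hsymm o b c]
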